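/- arXiv:1912.05948 — 9 statements merged into one kernel-verified Lean document; each statement's English description precedes it below -/
import Mathlib

section
/- Let A be an m×n complex matrix, B an n×p complex matrix, and let G be a {1}-inverse of A (i.e. AGA = A) and H a {1}-inverse of GAB (i.e. (GAB)H(GAB) = GAB). Then HG is a {1}-inverse of AB, i.e. (AB)(HG)(AB) = AB. -/
theorem stmt_0 {m n p : ℕ}
    (A : Matrix (Fin m) (Fin n) ℂ) (B : Matrix (Fin n) (Fin p) ℂ)
    (G : Matrix (Fin n) (Fin m) ℂ) (H : Matrix (Fin p) (Fin n) ℂ)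
    (hG : A * G * A = A)
    (hH : (G * A * B) * H * (G * A * B) = G * A * B) :
    (A * B) * (H * G) * (A * B) = A * B := by
  have key : A * ((G * A * B) * H * (G * A * B)) = A * (G * A * B) := by rw [hH]
  calc (A * B) * (H * G) * (A * B)
      = A * ((G * A * B) * H * (G * A * B)) := by
        nth_rewrite 1 [← hG]
        simp only [Matrix.mul_assoc]
    _ = A * (G * A * B) := key
    _ = A * B := by rw [← Matrix.mul_assoc, ← Matrix.mul_assoc, hG]
end

section
/- Let A be an m×n complex matrix, B an n×p complex matrix, G a {1}-inverse of B (BGB = B), and H a {1}-inverse of ABG ((ABG)H(ABG) = ABG). Then GH is a {1}-inverse of AB: (AB)(GH)(AB) = AB. -/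
theorem stmt_1 {m n p : ℕ}
    (A : Matrix (Fin m) (Fin n) ℂ) (B : Matrix (Fin n) (Fin p) ℂ)
    (G : Matrix (Fin p) (Fin n) ℂ) (H : Matrix (Fin n) (Fin m) ℂ)
    (hG : B * G * B = B)
    (hH : (A * B * G) * H * (A * B * G) = A * B * G) :
    (A * B) * (G * H) * (A * B) = A * B := by
  have : (A * B) * (G * H) * (A * B) = ((A * B * G) * H * (A * B * G)) * B := by
    simp only [Matrix.mul_assoc, hG]
  rw [this, hH, Matrix.mul_assoc A B G, Matrix.mul_assoc A (B * G) B, hG]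
end

section
/- Let A be an m×n complex matrix and B an n×p complex matrix. If H is a {1}-inverse of ABB* (i.e. (ABB*)H(ABB*) = ABB*), then B*·H is a {1}-inverse of AB: (AB)(B*H)(AB) = AB. -/
open Matrix

theorem stmt_3 {m n p : ℕ}
    (A : Matrix (Fin m) (Fin n) ℂ) (B : Matrix (Fin n) (Fin p) ℂ)
    (H : Matrix (Fin n) (Fin m) ℂ)
    (hH : (A * B * Bᴴ) * H * (A * B * Bᴴ) = A * B * Bᴴ) :
    (A * B) * (Bᴴ * H) * (A * B) = A * B := by
  open scoped ComplexOrder in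
  set Y := A * B * Bᴴ * H * A - A with hY
  have hYBB : Y * (B * Bᴴ) = 0 := by
    simp only [hY, Matrix.sub_mul]
    rw [sub_eq_zero]
    calc A * B * Bᴴ * H * A * (B * Bᴴ) = (A * B * Bᴴ) * H * (A * B * Bᴴ) := by
          simp only [Matrix.mul_assoc]
      _ = A * B * Bᴴ := hH
      _ = A * (B * Bᴴ) := by simp only [Matrix.mul_assoc]
  have hYB : Y * B = 0 := (Matrix.mul_self_mul_conjTranspose_eq_zero B Y).mp hYBB
  have : (A * B * Bᴴ * H * A - A) * B = 0 := hYB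
  rw [Matrix.sub_mul, sub_eq_zero] at this
  calc (A * B) * (Bᴴ * H) * (A * B) = A * B * Bᴴ * H * A * B := by
        simp only [Matrix.mul_assoc]
    _ = A * B := this
end

section
/- Let A be an m×n complex matrix and B an n×p complex matrix, and let G₁ be a {1}-inverse of A, G₂ a {1}-inverse of B. Set P = Iₙ − G₁A and Q = Iₙ − BG₂, and let H be a {1}-inverse of QP. Then G₂G₁ − G₂P·H·Q·G₁ is a {1}-inverse of AB, i.e. (AB)(G₂G₁ − G₂PHQG₁)(AB) = AB. -/
theorem stmt_5 {m n p : ℕ}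
    (A : Matrix (Fin m) (Fin n) ℂ) (B : Matrix (Fin n) (Fin p) ℂ)
    (G₁ : Matrix (Fin n) (Fin m) ℂ) (G₂ : Matrix (Fin p) (Fin n) ℂ)
    (H : Matrix (Fin n) (Fin n) ℂ)
    (hG₁ : A * G₁ * A = A) (hG₂ : B * G₂ * B = B)
    (hH : ((1 - B * G₂) * (1 - G₁ * A)) * H * ((1 - B * G₂) * (1 - G₁ * A))
        = (1 - B * G₂) * (1 - G₁ * A)) :
    (A * B) * (G₂ * G₁ - G₂ * (1 - G₁ * A) * H * (1 - B * G₂) * G₁) * (A * B) = A * B := by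
  set P : Matrix (Fin n) (Fin n) ℂ := 1 - G₁ * A with hP
  set Q : Matrix (Fin n) (Fin n) ℂ := 1 - B * G₂ with hQ
  have h1 : A * P = 0 := by
    rw [hP, Matrix.mul_sub, Matrix.mul_one, ← Matrix.mul_assoc, hG₁, sub_self]
  have h2 : Q * B = 0 := by
    rw [hQ, Matrix.sub_mul, Matrix.one_mul, hG₂, sub_self]
  have expand : (A * B) * (G₂ * G₁ - G₂ * P * H * Q * G₁) * (A * B)
      = A * B - A * (Q * B) - (A * P) * B + A * (Q * P * B)
        - (A * P) * (H * (Q * B)) + (A * P) * (H * (Q * (P * B)))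
        + A * (Q * (P * (H * (Q * B)))) - A * (Q * P * H * (Q * P)) * B := by
    rw [hP, hQ]
    simp only [Matrix.mul_sub, Matrix.sub_mul, Matrix.mul_one, Matrix.one_mul,
      Matrix.mul_assoc]
    abel
  rw [expand, h1, h2, hH]
  simp [Matrix.mul_assoc]
end

section
/- Let A ∈ ℂ^{m×n}, B ∈ ℂ^{n×p}, C ∈ ℂ^{p×q}, and let G₁ be a {1}-inverse of AB, G₂ a {1}-inverse of BC. Set P = I_p − G₁(AB) and Q = Iₙ − (BC)G₂, and let H be a {1}-inverse of QBP. Then G₂BG₁ − G₂BP·H·QB·G₁ is a {1}-inverse of ABC, i.e. (ABC)(G₂BG₁ − G₂BPHQBG₁)(ABC) = ABC. -/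
theorem stmt_6 {m n p q : ℕ}
    (A : Matrix (Fin m) (Fin n) ℂ) (B : Matrix (Fin n) (Fin p) ℂ)
    (C : Matrix (Fin p) (Fin q) ℂ)
    (G₁ : Matrix (Fin p) (Fin m) ℂ) (G₂ : Matrix (Fin q) (Fin n) ℂ)
    (H : Matrix (Fin p) (Fin n) ℂ)
    (hG₁ : (A * B) * G₁ * (A * B) = A * B) (hG₂ : (B * C) * G₂ * (B * C) = B * C)
    (hH : ((1 - (B * C) * G₂) * B * (1 - G₁ * (A * B))) * H *
          ((1 - (B * C) * G₂) * B * (1 - G₁ * (A * B)))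
        = (1 - (B * C) * G₂) * B * (1 - G₁ * (A * B))) :
    (A * B * C) *
      (G₂ * B * G₁ - G₂ * B * (1 - G₁ * (A * B)) * H * ((1 - (B * C) * G₂) * B) * G₁) *
      (A * B * C) = A * B * C := by
  have hABP : (A * B) * (1 - G₁ * (A * B)) = 0 := by
    rw [Matrix.mul_sub, Matrix.mul_one, ← Matrix.mul_assoc, hG₁, sub_self]
  have hQBC : (1 - (B * C) * G₂) * (B * C) = 0 := by
    rw [Matrix.sub_mul, Matrix.one_mul, hG₂, sub_self]
  have a1 : (A * B * C) * (G₂ * B * (1 - G₁ * (A * B)))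
      = -(A * ((1 - (B * C) * G₂) * B * (1 - G₁ * (A * B)))) := by
    have pure : (A * B * C) * (G₂ * B * (1 - G₁ * (A * B)))
        + A * ((1 - (B * C) * G₂) * B * (1 - G₁ * (A * B)))
        = (A * B) * (1 - G₁ * (A * B)) := by
      simp only [Matrix.mul_sub, Matrix.sub_mul, Matrix.mul_one, Matrix.one_mul,
        Matrix.mul_assoc]
      abel
    rw [hABP] at pure
    exact eq_neg_of_add_eq_zero_left pure
  have a2 : ((1 - (B * C) * G₂) * B) * (G₁ * (A * B * C))
      = -(((1 - (B * C) * G₂) * B * (1 - G₁ * (A * B))) * C) := by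
    have pure : ((1 - (B * C) * G₂) * B) * (G₁ * (A * B * C))
        + ((1 - (B * C) * G₂) * B * (1 - G₁ * (A * B))) * C
        = (1 - (B * C) * G₂) * (B * C) := by
      simp only [Matrix.mul_sub, Matrix.sub_mul, Matrix.mul_one, Matrix.one_mul,
        Matrix.mul_assoc]
      abel
    rw [hQBC] at pure
    exact eq_neg_of_add_eq_zero_left pure
  have a3 : (A * B * C) * (G₂ * B * G₁) * (A * B * C)
      = ((A * B) * G₁ * (A * B)) * C
        - A * (((1 - (B * C) * G₂) * B) * (G₁ * (A * B * C))) := by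
    simp only [Matrix.mul_sub, Matrix.sub_mul, Matrix.mul_one, Matrix.one_mul,
      Matrix.mul_assoc]
    abel
  have a4 : (A * B * C) * (G₂ * B * (1 - G₁ * (A * B)) * H * ((1 - (B * C) * G₂) * B) * G₁) * (A * B * C)
      = ((A * B * C) * (G₂ * B * (1 - G₁ * (A * B)))) * H
        * (((1 - (B * C) * G₂) * B) * (G₁ * (A * B * C))) := by
    simp only [Matrix.mul_assoc]
  have expand : (A * B * C) *
      (G₂ * B * G₁ - G₂ * B * (1 - G₁ * (A * B)) * H * ((1 - (B * C) * G₂) * B) * G₁) *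
      (A * B * C)
      = (A * B * C) * (G₂ * B * G₁) * (A * B * C)
        - (A * B * C) * (G₂ * B * (1 - G₁ * (A * B)) * H * ((1 - (B * C) * G₂) * B) * G₁) * (A * B * C) := by
    rw [Matrix.mul_sub, Matrix.sub_mul]
  rw [expand, a3, a4, a1, a2, hG₁]
  simp only [Matrix.mul_neg, Matrix.neg_mul, neg_neg, sub_neg_eq_add]
  have k : A * ((1 - (B * C) * G₂) * B * (1 - G₁ * (A * B))) * H *
        ((1 - (B * C) * G₂) * B * (1 - G₁ * (A * B)) * C)
      = A * ((1 - (B * C) * G₂) * B * (1 - G₁ * (A * B)) * C) := by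
    rw [Matrix.mul_assoc A _ H, Matrix.mul_assoc A,
      ← Matrix.mul_assoc (((1 - (B * C) * G₂) * B * (1 - G₁ * (A * B))) * H),
      ← Matrix.mul_assoc, hH, Matrix.mul_assoc]
  rw [k, add_sub_cancel_right]
end

section
/- Let A ∈ ℂ^{m×m} and C ∈ ℂ^{n×n} be invertible, B ∈ ℂ^{m×n}, M = ABC, and suppose the column space of A*AB equals the column space of B. Then for every {1,3}-inverse G of B (BGB = B and (BG)* = BG), the matrix C⁻¹GA⁻¹ is a {1,3}-inverse of M, i.e. M(C⁻¹GA⁻¹)M = M and (M·C⁻¹GA⁻¹)* = M·C⁻¹GA⁻¹. -/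
open Matrix

theorem stmt_15 {m n : ℕ}
    (A : Matrix (Fin m) (Fin m) ℂ) (C : Matrix (Fin n) (Fin n) ℂ)
    (B : Matrix (Fin m) (Fin n) ℂ)
    (hA : IsUnit A.det) (hC : IsUnit C.det)
    (hrange : LinearMap.range (Aᴴ * A * B).mulVecLin = LinearMap.range B.mulVecLin)
    (G : Matrix (Fin n) (Fin m) ℂ)
    (hG1 : B * G * B = B) (hG3 : (B * G)ᴴ = B * G) :
    (A * B * C) * (C⁻¹ * G * A⁻¹) * (A * B * C) = A * B * C ∧
    ((A * B * C) * (C⁻¹ * G * A⁻¹))ᴴ = (A * B * C) * (C⁻¹ * G * A⁻¹) := by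
  have hA' : IsUnit Aᴴ.det := by rw [Matrix.det_conjTranspose]; exact hA.star
  have hBGB : B * (G * (B * C)) = B * C := by
    rw [← Matrix.mul_assoc, ← Matrix.mul_assoc, hG1]
  have hsimp : (A * B * C) * (C⁻¹ * G * A⁻¹) = A * (B * G) * A⁻¹ := by
    simp only [Matrix.mul_assoc, Matrix.mul_nonsing_inv_cancel_left _ _ hC]
  -- P = B * G is a Hermitian idempotent with range = range B
  set P := B * G with hP
  -- there is Y with B * Y = Aᴴ * A * B, by the range hypothesis
  have hcol : ∀ j, ∃ y : Fin n → ℂ, B.mulVec y = (Aᴴ * A * B).mulVec (Pi.single j 1) := by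
    intro j
    have : (Aᴴ * A * B).mulVecLin (Pi.single j 1) ∈ LinearMap.range B.mulVecLin := by
      rw [← hrange]; exact LinearMap.mem_range_self _ _
    obtain ⟨y, hy⟩ := this
    exact ⟨y, hy⟩
  choose Y hY using hcol
  have hBY : B * (Matrix.of fun i j => Y j i) = Aᴴ * A * B := by
    ext i j
    have h := congrFun (hY j) i
    simp only [Matrix.mulVec_single, mul_one] at h
    rw [Matrix.mul_apply]
    simpa [Matrix.mulVec, dotProduct] using h
  -- key : P * (Aᴴ * A * B) = Aᴴ * A * B
  have hkey : P * (Aᴴ * A * B) = Aᴴ * A * B := by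
    rw [← hBY, ← Matrix.mul_assoc, hG1]
  -- hence P * (Aᴴ*A) * P = (Aᴴ*A) * P
  have hPHP : P * (Aᴴ * A) * P = Aᴴ * A * P := by
    have e1 : P * (Aᴴ * A) * P = (P * (Aᴴ * A * B)) * G := by
      rw [hP]; simp only [Matrix.mul_assoc]
    rw [e1, hkey, hP]; simp only [Matrix.mul_assoc]
  -- commutation
  have hcomm : P * (Aᴴ * A) = Aᴴ * A * P := by
    have h1 : (Aᴴ * A * P)ᴴ = P * (Aᴴ * A) := by
      simp [Matrix.conjTranspose_mul, hG3, Matrix.mul_assoc]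
    have h2 : (P * (Aᴴ * A) * P)ᴴ = P * (Aᴴ * A) * P := by
      simp [Matrix.conjTranspose_mul, hG3, Matrix.mul_assoc]
    calc P * (Aᴴ * A) = (Aᴴ * A * P)ᴴ := h1.symm
      _ = (P * (Aᴴ * A) * P)ᴴ := by rw [hPHP]
      _ = P * (Aᴴ * A) * P := h2
      _ = Aᴴ * A * P := hPHP
  constructor
  · calc (A * B * C) * (C⁻¹ * G * A⁻¹) * (A * B * C)
        = A * (B * (C * (C⁻¹ * (G * (A⁻¹ * (A * (B * C))))))) := by
          simp only [Matrix.mul_assoc]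
      _ = A * (B * (G * (B * C))) := by
          rw [Matrix.mul_nonsing_inv_cancel_left _ _ hC,
            Matrix.nonsing_inv_mul_cancel_left _ _ hA]
      _ = A * B * C := by rw [hBGB, Matrix.mul_assoc]
  · rw [hsimp]
    have : (A * P * A⁻¹)ᴴ = Aᴴ⁻¹ * (P * Aᴴ) := by
      simp [Matrix.conjTranspose_mul, Matrix.conjTranspose_nonsing_inv, hG3,
        Matrix.mul_assoc]
    rw [this]
    have hPAh : P * Aᴴ = Aᴴ * (A * P * A⁻¹) := by
      calc P * Aᴴ = P * (Aᴴ * A) * A⁻¹ := by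
            rw [← Matrix.mul_assoc P Aᴴ A, Matrix.mul_assoc (P * Aᴴ) A A⁻¹,
              Matrix.mul_nonsing_inv _ hA, Matrix.mul_one]
        _ = Aᴴ * A * P * A⁻¹ := by rw [hcomm]
        _ = Aᴴ * (A * P * A⁻¹) := by simp only [Matrix.mul_assoc]
    rw [hPAh, ← Matrix.mul_assoc, Matrix.nonsing_inv_mul _ hA', Matrix.one_mul]
end

section
/- Let A ∈ ℂ^{m×m} and C ∈ ℂ^{n×n} be invertible, B ∈ ℂ^{m×n}, M = ABC. Then M† = C⁻¹B†A⁻¹ holds if and only if the column space of A*AB equals the column space of B and the column space of CC*B* equals the column space of B*. -/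
open Matrix

/-- `X` is the Moore–Penrose inverse of `N`. -/
def IsMoorePenrose {m n : ℕ} (N : Matrix (Fin m) (Fin n) ℂ)
    (X : Matrix (Fin n) (Fin m) ℂ) : Prop :=
  N * X * N = N ∧ X * N * X = X ∧ (N * X)ᴴ = N * X ∧ (X * N)ᴴ = X * N

private lemma mp_unique {m n : ℕ} {N : Matrix (Fin m) (Fin n) ℂ}
    {X Y : Matrix (Fin n) (Fin m) ℂ}
    (hX : IsMoorePenrose N X) (hY : IsMoorePenrose N Y) : X = Y := by
  obtain ⟨hX1, hX2, hX3, hX4⟩ := hX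
  obtain ⟨hY1, hY2, hY3, hY4⟩ := hY
  have key : X * N = Y * N := by
    calc X * N = (X * N)ᴴ := hX4.symm
    _ = (X * (N * Y * N))ᴴ := by rw [hY1]
    _ = ((X * N) * (Y * N))ᴴ := by simp only [Matrix.mul_assoc]
    _ = (Y * N)ᴴ * (X * N)ᴴ := by rw [conjTranspose_mul]
    _ = (Y * N) * (X * N) := by rw [hX4, hY4]
    _ = Y * (N * X * N) := by simp only [Matrix.mul_assoc]
    _ = Y * N := by rw [hX1]
  have key2 : N * X = N * Y := by
    calc N * X = (N * X)ᴴ := hX3.symm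
    _ = ((N * Y * N) * X)ᴴ := by rw [hY1]
    _ = ((N * Y) * (N * X))ᴴ := by simp only [Matrix.mul_assoc]
    _ = (N * X)ᴴ * (N * Y)ᴴ := by rw [conjTranspose_mul]
    _ = (N * X) * (N * Y) := by rw [hX3, hY3]
    _ = (N * X * N) * Y := by simp only [Matrix.mul_assoc]
    _ = N * Y := by rw [hX1]
  calc X = X * N * X := hX2.symm
  _ = Y * N * X := by rw [key]
  _ = Y * (N * X) := by rw [Matrix.mul_assoc]
  _ = Y * (N * Y) := by rw [key2]
  _ = Y * N * Y := by rw [Matrix.mul_assoc]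
  _ = Y := hY2

private lemma matrix_ext_mulVec {a b : ℕ} {X Y : Matrix (Fin a) (Fin b) ℂ}
    (h : ∀ v, X.mulVec v = Y.mulVec v) : X = Y := by
  ext i j
  have := congrFun (h (Pi.single j 1)) i
  simpa [Matrix.mulVec_single_one] using this

private lemma range_le_of_factor {a b c : ℕ} (X : Matrix (Fin a) (Fin b) ℂ)
    (Y : Matrix (Fin a) (Fin c) ℂ) (Z : Matrix (Fin c) (Fin b) ℂ)
    (h : X = Y * Z) :
    LinearMap.range X.mulVecLin ≤ LinearMap.range Y.mulVecLin := by
  subst h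
  rw [Matrix.mulVecLin_mul]
  exact LinearMap.range_comp_le_range _ _

private lemma proj_fix {m n k : ℕ} (B : Matrix (Fin m) (Fin n) ℂ)
    (Bd : Matrix (Fin n) (Fin m) ℂ) (h1 : B * Bd * B = B)
    (W : Matrix (Fin m) (Fin k) ℂ)
    (hle : LinearMap.range W.mulVecLin ≤ LinearMap.range B.mulVecLin) :
    B * Bd * W = W := by
  apply matrix_ext_mulVec
  intro v
  have : W.mulVec v ∈ LinearMap.range B.mulVecLin := hle ⟨v, rfl⟩
  obtain ⟨y, hy⟩ := this
  simp only [Matrix.mulVecLin_apply] at hy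
  calc (B * Bd * W).mulVec v = (B * Bd).mulVec (W.mulVec v) := by
        rw [Matrix.mulVec_mulVec]
  _ = (B * Bd).mulVec (B.mulVec y) := by rw [hy]
  _ = (B * Bd * B).mulVec y := Matrix.mulVec_mulVec _ _ _
  _ = B.mulVec y := by rw [h1]
  _ = W.mulVec v := hy

/-- Key equivalence: for a hermitian invertible `G` and the projector `B * Bd`,
commutation with the projector is equivalent to range preservation. -/
private lemma aux_comm_iff_range {m n : ℕ} (B : Matrix (Fin m) (Fin n) ℂ)
    (Bd : Matrix (Fin n) (Fin m) ℂ)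
    (h1 : B * Bd * B = B) (h3 : (B * Bd)ᴴ = B * Bd)
    (G Gi : Matrix (Fin m) (Fin m) ℂ) (hGH : Gᴴ = G)
    (hGGi : G * Gi = 1) (hGiG : Gi * G = 1) :
    G * (B * Bd) = (B * Bd) * G ↔
      LinearMap.range (G * B).mulVecLin = LinearMap.range B.mulVecLin := by
  have cG : ∀ (k : ℕ) (X : Matrix (Fin m) (Fin k) ℂ), G * (Gi * X) = X := fun k X => by
    rw [← Matrix.mul_assoc, hGGi, Matrix.one_mul]
  have cGi : ∀ (k : ℕ) (X : Matrix (Fin m) (Fin k) ℂ), Gi * (G * X) = X := fun k X => by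
    rw [← Matrix.mul_assoc, hGiG, Matrix.one_mul]
  constructor
  · intro hc
    apply le_antisymm
    · apply range_le_of_factor _ _ (Bd * (G * B))
      calc G * B = G * (B * Bd * B) := by rw [h1]
      _ = (G * (B * Bd)) * B := by simp only [Matrix.mul_assoc]
      _ = ((B * Bd) * G) * B := by rw [hc]
      _ = B * (Bd * (G * B)) := by simp only [Matrix.mul_assoc]
    · apply range_le_of_factor _ _ (Bd * (Gi * B))
      have hc' : Gi * (B * Bd) = (B * Bd) * Gi := by
        calc Gi * (B * Bd) = Gi * ((B * Bd) * (G * Gi)) := by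
              rw [hGGi, Matrix.mul_one]
        _ = Gi * (((B * Bd) * G) * Gi) := by simp only [Matrix.mul_assoc]
        _ = Gi * ((G * (B * Bd)) * Gi) := by rw [hc]
        _ = (B * Bd) * Gi := by simp only [Matrix.mul_assoc, cGi]
      calc B = G * (Gi * (B * Bd * B)) := by rw [h1, cG]
      _ = G * ((Gi * (B * Bd)) * B) := by simp only [Matrix.mul_assoc]
      _ = G * (((B * Bd) * Gi) * B) := by rw [hc']
      _ = (G * B) * (Bd * (Gi * B)) := by simp only [Matrix.mul_assoc]
  · intro hr
    have hfix : B * Bd * (G * B) = G * B := proj_fix B Bd h1 _ (le_of_eq hr)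
    have hPGP : (B * Bd) * (G * (B * Bd)) = G * (B * Bd) := by
      calc (B * Bd) * (G * (B * Bd)) = (B * Bd * (G * B)) * Bd := by
            simp only [Matrix.mul_assoc]
      _ = (G * B) * Bd := by rw [hfix]
      _ = G * (B * Bd) := Matrix.mul_assoc _ _ _
    calc G * (B * Bd) = (B * Bd) * (G * (B * Bd)) := hPGP.symm
    _ = ((B * Bd) * (G * (B * Bd)))ᴴᴴ := (conjTranspose_conjTranspose _).symm
    _ = ((G * (B * Bd))ᴴ * (B * Bd)ᴴ)ᴴ := by
          rw [conjTranspose_mul (B * Bd) (G * (B * Bd))]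
    _ = (((B * Bd)ᴴ * Gᴴ) * (B * Bd)ᴴ)ᴴ := by rw [conjTranspose_mul G (B * Bd)]
    _ = (((B * Bd) * G) * (B * Bd))ᴴ := by rw [h3, hGH]
    _ = ((B * Bd) * (G * (B * Bd)))ᴴ := by rw [Matrix.mul_assoc]
    _ = (G * (B * Bd))ᴴ := by rw [hPGP]
    _ = (B * Bd)ᴴ * Gᴴ := conjTranspose_mul _ _
    _ = (B * Bd) * G := by rw [h3, hGH]

theorem stmt_16 {m n : ℕ}
    (A : Matrix (Fin m) (Fin m) ℂ) (C : Matrix (Fin n) (Fin n) ℂ)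
    (B : Matrix (Fin m) (Fin n) ℂ)
    (hA : IsUnit A.det) (hC : IsUnit C.det)
    (Bd : Matrix (Fin n) (Fin m) ℂ) (Md : Matrix (Fin n) (Fin m) ℂ)
    (hBd : IsMoorePenrose B Bd) (hMd : IsMoorePenrose (A * B * C) Md) :
    Md = C⁻¹ * Bd * A⁻¹ ↔
      (LinearMap.range (Aᴴ * A * B).mulVecLin = LinearMap.range B.mulVecLin ∧
       LinearMap.range (C * Cᴴ * Bᴴ).mulVecLin = LinearMap.range Bᴴ.mulVecLin) := by
  obtain ⟨h1, h2, h3, h4⟩ := hBd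
  have hAi : A * A⁻¹ = 1 := Matrix.mul_nonsing_inv A hA
  have hiA : A⁻¹ * A = 1 := Matrix.nonsing_inv_mul A hA
  have hCi : C * C⁻¹ = 1 := Matrix.mul_nonsing_inv C hC
  have hiC : C⁻¹ * C = 1 := Matrix.nonsing_inv_mul C hC
  have hAH : IsUnit Aᴴ.det := by rw [Matrix.det_conjTranspose]; exact hA.star
  have hCH : IsUnit Cᴴ.det := by rw [Matrix.det_conjTranspose]; exact hC.star
  have hAHi : Aᴴ * Aᴴ⁻¹ = 1 := Matrix.mul_nonsing_inv _ hAH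
  have hiAH : Aᴴ⁻¹ * Aᴴ = 1 := Matrix.nonsing_inv_mul _ hAH
  have hCHi : Cᴴ * Cᴴ⁻¹ = 1 := Matrix.mul_nonsing_inv _ hCH
  have hiCH : Cᴴ⁻¹ * Cᴴ = 1 := Matrix.nonsing_inv_mul _ hCH
  -- applied cancellation lemmas
  have cA : ∀ (k : ℕ) (X : Matrix (Fin m) (Fin k) ℂ), A * (A⁻¹ * X) = X := fun k X => by
    rw [← Matrix.mul_assoc, hAi, Matrix.one_mul]
  have ciA : ∀ (k : ℕ) (X : Matrix (Fin m) (Fin k) ℂ), A⁻¹ * (A * X) = X := fun k X => by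
    rw [← Matrix.mul_assoc, hiA, Matrix.one_mul]
  have cC : ∀ (k : ℕ) (X : Matrix (Fin n) (Fin k) ℂ), C * (C⁻¹ * X) = X := fun k X => by
    rw [← Matrix.mul_assoc, hCi, Matrix.one_mul]
  have ciC : ∀ (k : ℕ) (X : Matrix (Fin n) (Fin k) ℂ), C⁻¹ * (C * X) = X := fun k X => by
    rw [← Matrix.mul_assoc, hiC, Matrix.one_mul]
  have cAH : ∀ (k : ℕ) (X : Matrix (Fin m) (Fin k) ℂ), Aᴴ * (Aᴴ⁻¹ * X) = X := fun k X => by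
    rw [← Matrix.mul_assoc, hAHi, Matrix.one_mul]
  have ciAH : ∀ (k : ℕ) (X : Matrix (Fin m) (Fin k) ℂ), Aᴴ⁻¹ * (Aᴴ * X) = X := fun k X => by
    rw [← Matrix.mul_assoc, hiAH, Matrix.one_mul]
  have cCH : ∀ (k : ℕ) (X : Matrix (Fin n) (Fin k) ℂ), Cᴴ * (Cᴴ⁻¹ * X) = X := fun k X => by
    rw [← Matrix.mul_assoc, hCHi, Matrix.one_mul]
  have ciCH : ∀ (k : ℕ) (X : Matrix (Fin n) (Fin k) ℂ), Cᴴ⁻¹ * (Cᴴ * X) = X := fun k X => by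
    rw [← Matrix.mul_assoc, hiCH, Matrix.one_mul]
  -- products
  have e1 : A * B * C * (C⁻¹ * Bd * A⁻¹) = A * (B * Bd) * A⁻¹ := by
    simp only [Matrix.mul_assoc, cC]
  have e2 : (C⁻¹ * Bd * A⁻¹) * (A * B * C) = C⁻¹ * (Bd * B) * C := by
    simp only [Matrix.mul_assoc, ciA]
  -- step 1: Md = C⁻¹ Bd A⁻¹ ↔ two hermiticity conditions
  have key : Md = C⁻¹ * Bd * A⁻¹ ↔
      ((A * (B * Bd) * A⁻¹)ᴴ = A * (B * Bd) * A⁻¹ ∧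
       (C⁻¹ * (Bd * B) * C)ᴴ = C⁻¹ * (Bd * B) * C) := by
    constructor
    · rintro rfl
      obtain ⟨_, _, hm3, hm4⟩ := hMd
      rw [e1] at hm3
      rw [e2] at hm4
      exact ⟨hm3, hm4⟩
    · rintro ⟨hh1, hh2⟩
      refine mp_unique hMd ⟨?_, ?_, ?_, ?_⟩
      · have h1' : B * (Bd * (B * C)) = B * C := by
          rw [← Matrix.mul_assoc, ← Matrix.mul_assoc, h1]
        simp only [Matrix.mul_assoc, cC, ciA, h1']
      · have h2' : Bd * (B * (Bd * A⁻¹)) = Bd * A⁻¹ := by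
          rw [← Matrix.mul_assoc, ← Matrix.mul_assoc, h2]
        simp only [Matrix.mul_assoc, cC, ciA, h2']
      · rw [e1]; exact hh1
      · rw [e2]; exact hh2
  -- step 2: hermiticity ↔ commutation
  have k1 : (A * (B * Bd) * A⁻¹)ᴴ = A * (B * Bd) * A⁻¹ ↔
      (Aᴴ * A) * (B * Bd) = (B * Bd) * (Aᴴ * A) := by
    have hinvH : (A⁻¹)ᴴ = Aᴴ⁻¹ := Matrix.conjTranspose_nonsing_inv A
    have lhs_eq : (A * (B * Bd) * A⁻¹)ᴴ = Aᴴ⁻¹ * ((B * Bd) * Aᴴ) := by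
      rw [conjTranspose_mul, conjTranspose_mul, hinvH, h3, Matrix.mul_assoc]
    rw [lhs_eq]
    constructor
    · intro h
      calc (Aᴴ * A) * (B * Bd)
          = Aᴴ * ((A * (B * Bd) * A⁻¹) * A) := by
            simp only [Matrix.mul_assoc, hiA, Matrix.mul_one]
      _ = Aᴴ * ((Aᴴ⁻¹ * ((B * Bd) * Aᴴ)) * A) := by rw [h]
      _ = (B * Bd) * (Aᴴ * A) := by
            simp only [Matrix.mul_assoc, cAH]
    · intro h
      calc Aᴴ⁻¹ * ((B * Bd) * Aᴴ)
          = Aᴴ⁻¹ * (((B * Bd) * (Aᴴ * A)) * A⁻¹) := by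
            simp only [Matrix.mul_assoc, hAi, Matrix.mul_one]
      _ = Aᴴ⁻¹ * (((Aᴴ * A) * (B * Bd)) * A⁻¹) := by rw [h]
      _ = A * (B * Bd) * A⁻¹ := by
            simp only [Matrix.mul_assoc, ciAH]
  have k2 : (C⁻¹ * (Bd * B) * C)ᴴ = C⁻¹ * (Bd * B) * C ↔
      (C * Cᴴ) * (Bd * B) = (Bd * B) * (C * Cᴴ) := by
    have hinvH : (C⁻¹)ᴴ = Cᴴ⁻¹ := Matrix.conjTranspose_nonsing_inv C
    have lhs_eq : (C⁻¹ * (Bd * B) * C)ᴴ = Cᴴ * ((Bd * B) * Cᴴ⁻¹) := by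
      rw [conjTranspose_mul, conjTranspose_mul, hinvH, h4, Matrix.mul_assoc]
    rw [lhs_eq]
    constructor
    · intro h
      calc (C * Cᴴ) * (Bd * B)
          = C * ((Cᴴ * ((Bd * B) * Cᴴ⁻¹)) * Cᴴ) := by
            simp only [Matrix.mul_assoc, hiCH, Matrix.mul_one]
      _ = C * ((C⁻¹ * (Bd * B) * C) * Cᴴ) := by rw [h]
      _ = (Bd * B) * (C * Cᴴ) := by
            simp only [Matrix.mul_assoc, cC]
    · intro h
      calc Cᴴ * ((Bd * B) * Cᴴ⁻¹)
          = C⁻¹ * (((C * Cᴴ) * (Bd * B)) * Cᴴ⁻¹) := by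
            simp only [Matrix.mul_assoc, ciC]
      _ = C⁻¹ * (((Bd * B) * (C * Cᴴ)) * Cᴴ⁻¹) := by rw [h]
      _ = C⁻¹ * (Bd * B) * C := by
            simp only [Matrix.mul_assoc, hCHi, Matrix.mul_one]
  -- step 3: commutation ↔ range condition
  have a1 : (Aᴴ * A) * (B * Bd) = (B * Bd) * (Aᴴ * A) ↔
      LinearMap.range ((Aᴴ * A) * B).mulVecLin = LinearMap.range B.mulVecLin := by
    refine aux_comm_iff_range B Bd h1 h3 (Aᴴ * A) (A⁻¹ * Aᴴ⁻¹) ?_ ?_ ?_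
    · rw [conjTranspose_mul, conjTranspose_conjTranspose]
    · simp only [Matrix.mul_assoc, cA, hAHi]
    · simp only [Matrix.mul_assoc, ciAH, hiA]
  have hQ : Bᴴ * Bdᴴ = Bd * B := by rw [← conjTranspose_mul, h4]
  have h1' : Bᴴ * Bdᴴ * Bᴴ = Bᴴ := by
    have := congrArg conjTranspose h1
    rw [conjTranspose_mul, conjTranspose_mul] at this
    rw [Matrix.mul_assoc]
    exact this
  have h3' : (Bᴴ * Bdᴴ)ᴴ = Bᴴ * Bdᴴ := by
    rw [hQ]; exact h4
  have a2 : (C * Cᴴ) * (Bd * B) = (Bd * B) * (C * Cᴴ) ↔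
      LinearMap.range ((C * Cᴴ) * Bᴴ).mulVecLin = LinearMap.range Bᴴ.mulVecLin := by
    have haux := aux_comm_iff_range Bᴴ Bdᴴ h1' h3' (C * Cᴴ) (Cᴴ⁻¹ * C⁻¹) ?_ ?_ ?_
    · rwa [hQ] at haux
    · rw [conjTranspose_mul, conjTranspose_conjTranspose]
    · simp only [Matrix.mul_assoc, cCH, hCi]
    · simp only [Matrix.mul_assoc, ciC, hiCH]
  rw [key, k1, k2]
  exact and_congr a1 a2
end

section
/- Let A, B ∈ ℂ^{m×m} be idempotent matrices (A² = A, B² = B), and let α, β be complex scalars with α ≠ −1, 0 and β ≠ −1, 0. Set λ = αβ(1+α)⁻¹(1+β)⁻¹. Then I_m + αA + βB = (I_m + αA)·(I_m − λAB)·(I_m + βB), and I_m + αA + βB = (I_m + βB)·(I_m − λBA)·(I_m + αA). -/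
theorem stmt_18 {m : ℕ}
    (A B : Matrix (Fin m) (Fin m) ℂ)
    (hA : A * A = A) (hB : B * B = B)
    (α β : ℂ) (hα1 : α ≠ -1) (hα0 : α ≠ 0) (hβ1 : β ≠ -1) (hβ0 : β ≠ 0) :
    (1 : Matrix (Fin m) (Fin m) ℂ) + α • A + β • B =
      (1 + α • A) * (1 - (α * β * (1 + α)⁻¹ * (1 + β)⁻¹) • (A * B)) * (1 + β • B) ∧
    (1 : Matrix (Fin m) (Fin m) ℂ) + α • A + β • B =
      (1 + β • B) * (1 - (α * β * (1 + α)⁻¹ * (1 + β)⁻¹) • (B * A)) * (1 + α • A) := by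
  have hα : (1:ℂ) + α ≠ 0 := fun h => hα1 (by linear_combination h)
  have hβ : (1:ℂ) + β ≠ 0 := fun h => hβ1 (by linear_combination h)
  have hA' : ∀ X, A * (A * X) = A * X := fun X => by rw [← mul_assoc, hA]
  have hB' : ∀ X, B * (B * X) = B * X := fun X => by rw [← mul_assoc, hB]
  constructor <;>
  · simp only [mul_sub, sub_mul, mul_add, add_mul, mul_one, one_mul,
      mul_smul_comm, smul_mul_assoc, smul_smul, mul_assoc, hA, hB, hA', hB']
    match_scalars <;> field_simp <;> ring
end

section
/- Let A, B ∈ ℂ^{m×m} be idempotent, α, β ∈ ℂ with α ≠ −1, 0 and β ≠ −1, 0, and λ = αβ(1+α)⁻¹(1+β)⁻¹. Then X is a {1}-inverse of I_m − λAB (i.e. (I_m − λAB)X(I_m − λAB) = I_m − λAB) if and only if X = (I_m + βB)·Y·(I_m + αA) for some {1}-inverse Y of I_m + αA + βB. -/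
theorem stmt_19 {m : ℕ}
    (A B : Matrix (Fin m) (Fin m) ℂ)
    (hA : A * A = A) (hB : B * B = B)
    (α β : ℂ) (hα1 : α ≠ -1) (hα0 : α ≠ 0) (hβ1 : β ≠ -1) (hβ0 : β ≠ 0)
    (X : Matrix (Fin m) (Fin m) ℂ) :
    ((1 - (α * β * (1 + α)⁻¹ * (1 + β)⁻¹) • (A * B)) * X *
        (1 - (α * β * (1 + α)⁻¹ * (1 + β)⁻¹) • (A * B))
      = 1 - (α * β * (1 + α)⁻¹ * (1 + β)⁻¹) • (A * B)) ↔
    ∃ Y : Matrix (Fin m) (Fin m) ℂ,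
      ((1 + α • A + β • B) * Y * (1 + α • A + β • B) = 1 + α • A + β • B) ∧
      X = (1 + β • B) * Y * (1 + α • A) := by
  have h1α : (1 + α) ≠ 0 := fun h => hα1 (by linear_combination h)
  have h1β : (1 + β) ≠ 0 := fun h => hβ1 (by linear_combination h)
  set A' : Matrix (Fin m) (Fin m) ℂ := 1 + α • A with hA'def
  set B' : Matrix (Fin m) (Fin m) ℂ := 1 + β • B with hB'def
  set P : Matrix (Fin m) (Fin m) ℂ := 1 - (α * (1+α)⁻¹) • A with hPdef
  set Q : Matrix (Fin m) (Fin m) ℂ := 1 - (β * (1+β)⁻¹) • B with hQdef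
  set N : Matrix (Fin m) (Fin m) ℂ :=
    1 - (α * β * (1 + α)⁻¹ * (1 + β)⁻¹) • (A * B) with hNdef
  have haux1 : A * (A * B) = A * B := by rw [← mul_assoc, hA]
  have hA'P : A' * P = 1 := by
    rw [hA'def, hPdef]
    simp only [mul_sub, sub_mul, mul_add, add_mul, mul_one, one_mul,
      smul_mul_assoc, mul_smul_comm, smul_smul, hA]
    match_scalars <;> field_simp <;> ring
  have hPA' : P * A' = 1 := by
    rw [hA'def, hPdef]
    simp only [mul_sub, sub_mul, mul_add, add_mul, mul_one, one_mul,
      smul_mul_assoc, mul_smul_comm, smul_smul, hA]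
    match_scalars <;> field_simp <;> ring
  have hB'Q : B' * Q = 1 := by
    rw [hB'def, hQdef]
    simp only [mul_sub, sub_mul, mul_add, add_mul, mul_one, one_mul,
      smul_mul_assoc, mul_smul_comm, smul_smul, hB]
    match_scalars <;> field_simp <;> ring
  have hQB' : Q * B' = 1 := by
    rw [hB'def, hQdef]
    simp only [mul_sub, sub_mul, mul_add, add_mul, mul_one, one_mul,
      smul_mul_assoc, mul_smul_comm, smul_smul, hB]
    match_scalars <;> field_simp <;> ring
  have key : A' * (N * B') = 1 + α • A + β • B := by
    rw [hA'def, hB'def, hNdef]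
    simp only [mul_sub, sub_mul, mul_add, add_mul, mul_one, one_mul,
      smul_mul_assoc, mul_smul_comm, smul_smul, mul_assoc, hA, hB, haux1]
    match_scalars <;> field_simp <;> ring
  -- cancellation lemmas
  have c1 : ∀ x : Matrix (Fin m) (Fin m) ℂ, A' * (P * x) = x := fun x => by
    rw [← mul_assoc, hA'P, one_mul]
  have c2 : ∀ x : Matrix (Fin m) (Fin m) ℂ, P * (A' * x) = x := fun x => by
    rw [← mul_assoc, hPA', one_mul]
  have c3 : ∀ x : Matrix (Fin m) (Fin m) ℂ, B' * (Q * x) = x := fun x => by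
    rw [← mul_assoc, hB'Q, one_mul]
  have c4 : ∀ x : Matrix (Fin m) (Fin m) ℂ, Q * (B' * x) = x := fun x => by
    rw [← mul_assoc, hQB', one_mul]
  rw [← key]
  constructor
  · intro hX
    refine ⟨Q * (X * P), ?_, ?_⟩
    · simp only [mul_assoc, c2, c3]
      have h2 := congrArg (fun z => A' * (z * B')) hX
      simp only [mul_assoc] at h2
      exact h2
    · simp only [mul_assoc, c1, c2, c3, c4]
      rw [hPA', mul_one]
  · rintro ⟨Y, hY, rfl⟩
    have h2 := congrArg (fun z => P * (z * Q)) hY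
    simp only [mul_assoc, c2, hB'Q, mul_one] at h2
    simp only [mul_assoc]
    exact h2
end
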